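/- Let 𝓘 = (I_1,…,I_t), t ≥ 2, be an irreducible sequence of coloring channels over Σ = [q], and let k = ω(P_𝓘) be the clique number of the pairs graph of 𝓘. Then log_q k ≤ cap(𝓘) ≤ log_q (k t e), where e is Euler's number. -/

import Mathlib

/-- The output of a single coloring channel `I`: the subsequence of `x`
consisting (in order) of the letters of `x` that belong to `I`. -/
def channelOutput {q : ℕ} (I : Finset (Fin q)) (x : List (Fin q)) : List (Fin q) :=
  x.filter (fun a => a ∈ I)

/-- The set `A_𝓘(n)` of all tuples of channel outputs over inputs of length `n`. -/
def channelOutputs {q : ℕ} {ι : Type} (𝓘 : ι → Finset (Fin q)) (n : ℕ) :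
    Set (ι → List (Fin q)) :=
  { y | ∃ x : List (Fin q), x.length = n ∧ y = fun i => channelOutput (𝓘 i) x }

/-- The capacity of a sequence of coloring channels:
`limsup_{n→∞} (1/n) log_q |A_𝓘(n)|`. -/
noncomputable def capacity {q : ℕ} {ι : Type} (𝓘 : ι → Finset (Fin q)) : ℝ :=
  Filter.atTop.limsup fun n : ℕ =>
    Real.logb q ((channelOutputs 𝓘 n).ncard : ℝ) / (n : ℝ)

/-- The binary entropy function (with `H(0) = H(1) = 0`). -/
noncomputable def binH (x : ℝ) : ℝ :=
  -(x * Real.logb 2 x) - (1 - x) * Real.logb 2 (1 - x)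

lemma filter_inj {q t : ℕ} (𝓘 : Fin t → Finset (Fin q)) (s : Finset (Fin q))
    (hs : ∀ u ∈ s, ∀ v ∈ s, u ≠ v → ∃ i, u ∈ 𝓘 i ∧ v ∈ 𝓘 i) :
    ∀ x y : List (Fin q), (∀ a ∈ x, a ∈ s) → (∀ a ∈ y, a ∈ s) →
      x.length = y.length →
      (∀ i, channelOutput (𝓘 i) x = channelOutput (𝓘 i) y) → x = y := by
  intro x
  induction x with
  | nil => intro y _ _ hl _; exact (List.length_eq_zero_iff.mp hl.symm).symm
  | cons a x ih =>
    intro y hx hy hl hout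
    cases y with
    | nil => simp at hl
    | cons b y =>
      rcases eq_or_ne a b with rfl | hab
      · have : x = y := by
          refine ih y (fun c hc => hx c (List.mem_cons_of_mem _ hc))
            (fun c hc => hy c (List.mem_cons_of_mem _ hc))
            (by simpa using hl) ?_
          intro i
          have h := hout i
          unfold channelOutput at h ⊢
          by_cases hai : a ∈ 𝓘 i
          · simp only [List.filter_cons, hai, decide_eq_true_eq] at h
            simpa using h
          · simpa [List.filter_cons, hai] using h
        rw [this]
      · obtain ⟨i, hai, hbi⟩ := hs a (hx a List.mem_cons_self) b
          (hy b List.mem_cons_self) hab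
        have h := hout i
        unfold channelOutput at h
        simp only [List.filter_cons, hai, hbi, decide_eq_true_eq] at h
        exact absurd (List.head_eq_of_cons_eq h) hab

lemma outputs_eq_image {q : ℕ} {ι : Type} (𝓘 : ι → Finset (Fin q)) (n : ℕ) :
    channelOutputs 𝓘 n = (fun x => fun i => channelOutput (𝓘 i) x) '' {x | x.length = n} := by
  ext y; simp [channelOutputs, Set.mem_image, eq_comm]

lemma outputs_finite {q : ℕ} {ι : Type} (𝓘 : ι → Finset (Fin q)) (n : ℕ) :
    (channelOutputs 𝓘 n).Finite := by
  rw [outputs_eq_image]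
  exact (List.finite_length_eq (Fin q) n).image _

lemma outputs_nonempty {q : ℕ} {ι : Type} (hq : 0 < q) (𝓘 : ι → Finset (Fin q)) (n : ℕ) :
    (channelOutputs 𝓘 n).Nonempty := by
  refine ⟨fun i => channelOutput (𝓘 i) (List.replicate n ⟨0, hq⟩),
    List.replicate n ⟨0, hq⟩, by simp, rfl⟩

lemma lower_card {q t : ℕ} (𝓘 : Fin t → Finset (Fin q)) (s : Finset (Fin q))
    (hs : ∀ u ∈ s, ∀ v ∈ s, u ≠ v → ∃ i, u ∈ 𝓘 i ∧ v ∈ 𝓘 i) (n : ℕ) :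
    s.card ^ n ≤ (channelOutputs 𝓘 n).ncard := by
  classical
  have hfin := outputs_finite 𝓘 n
  haveI : Finite (channelOutputs 𝓘 n) := hfin.to_subtype
  set g : (Fin n → ↥s) → ↥(channelOutputs 𝓘 n) := fun f =>
    ⟨fun i => channelOutput (𝓘 i) (List.ofFn (fun j => ((f j : Fin q)))),
      ⟨List.ofFn (fun j => ((f j : Fin q))), by simp, rfl⟩⟩ with hg
  have ginj : Function.Injective g := by
    intro f f' hff
    have hout : ∀ i, channelOutput (𝓘 i) (List.ofFn (fun j => ((f j : Fin q)))) =
        channelOutput (𝓘 i) (List.ofFn (fun j => ((f' j : Fin q)))) := by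
      intro i; exact congrFun (Subtype.ext_iff.mp hff) i
    have hxy : List.ofFn (fun j => ((f j : Fin q))) = List.ofFn (fun j => ((f' j : Fin q))) := by
      apply filter_inj 𝓘 s hs
      · intro a ha; obtain ⟨j, rfl⟩ := List.mem_ofFn.mp (by simpa using ha); exact (f j).2
      · intro a ha; obtain ⟨j, rfl⟩ := List.mem_ofFn.mp (by simpa using ha); exact (f' j).2
      · simp
      · exact hout
    funext j
    exact Subtype.ext (congrFun (List.ofFn_injective hxy) j)
  calc s.card ^ n = Nat.card (Fin n → ↥s) := by
        rw [Nat.card_fun]; simp [Nat.card_eq_fintype_card]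
    _ ≤ Nat.card ↥(channelOutputs 𝓘 n) := Nat.card_le_card_of_injective g ginj
    _ = (channelOutputs 𝓘 n).ncard := Nat.card_coe_set_eq _

lemma upper_card {q t : ℕ} (𝓘 : Fin t → Finset (Fin q)) (U : Finset (Fin q))
    (hU : ∀ i, 𝓘 i ⊆ U) (u0 : Fin q) (hu0 : u0 ∈ U) (n : ℕ) :
    (channelOutputs 𝓘 n).ncard ≤ (n + 1) * U.card ^ n := by
  classical
  set Z : Set (List (Fin q)) := {z | z.length ≤ n ∧ ∀ a ∈ z, a ∈ U} with hZ
  have hZfin : Z.Finite := (List.finite_length_le (Fin q) n).subset (fun z hz => hz.1)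
  have hsub : channelOutputs 𝓘 n ⊆ (fun z => fun i => channelOutput (𝓘 i) z) '' Z := by
    rintro y ⟨x, hxl, rfl⟩
    refine ⟨x.filter (fun a => a ∈ U), ⟨?_, ?_⟩, ?_⟩
    · exact le_trans (List.length_filter_le _ _) (le_of_eq hxl)
    · intro a ha; simpa using (List.mem_filter.mp ha).2
    · funext i
      unfold channelOutput
      simp only [List.filter_filter]
      congr 1
      funext a
      by_cases hai : a ∈ 𝓘 i
      · simp [hai, hU i hai]
      · simp [hai]
  haveI : Finite ↥Z := hZfin.to_subtype
  set e : ↥Z → Fin (n + 1) × (Fin n → ↥U) := fun z =>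
    (⟨z.1.length, by have := z.2.1; omega⟩,
     fun j => if h : (j : ℕ) < z.1.length then ⟨z.1.get ⟨j, h⟩, z.2.2 _ (z.1.get_mem _)⟩
       else ⟨u0, hu0⟩) with he
  have einj : Function.Injective e := by
    rintro ⟨z, hz⟩ ⟨z', hz'⟩ hzz
    have h1 : z.length = z'.length := congrArg (fun p => (p.1 : ℕ)) hzz
    refine Subtype.ext (List.ext_get h1 ?_)
    intro m hm hm'
    have hmn : m < n := lt_of_lt_of_le hm hz.1
    have h2 := congrFun (congrArg Prod.snd hzz) ⟨m, hmn⟩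
    simp only [he, dif_pos hm, dif_pos hm'] at h2
    exact Subtype.ext_iff.mp h2
  calc (channelOutputs 𝓘 n).ncard ≤ ((fun z => fun i => channelOutput (𝓘 i) z) '' Z).ncard :=
        Set.ncard_le_ncard hsub (hZfin.image _)
    _ ≤ Z.ncard := Set.ncard_image_le hZfin
    _ = Nat.card ↥Z := (Nat.card_coe_set_eq _).symm
    _ ≤ Nat.card (Fin (n + 1) × (Fin n → ↥U)) := Nat.card_le_card_of_injective e einj
    _ = (n + 1) * U.card ^ n := by
        rw [Nat.card_prod, Nat.card_fun]
        simp [Nat.card_eq_fintype_card]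

/-- general bounds on the capacity of an irreducible sequence of
coloring channels in terms of the clique number `k` of its pairs graph:
`log_q k ≤ cap(𝓘) ≤ log_q (k t e)`. -/
theorem capacity_general_bounds (q t : ℕ) (hq : 2 ≤ q) (ht : 2 ≤ t)
    (𝓘 : Fin t → Finset (Fin q)) (hne : ∀ i, (𝓘 i).Nonempty)
    (hsub : ∀ i j : Fin t, i ≠ j → ¬ 𝓘 i ⊆ 𝓘 j)
    (hnsep : ¬ ∃ S : Finset (Fin t), S.Nonempty ∧ S ≠ Finset.univ ∧
      (S.biUnion 𝓘) ∩ (Sᶜ.biUnion 𝓘) = ∅)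
    (P : SimpleGraph (Fin q))
    (hP : ∀ u v : Fin q, P.Adj u v ↔ u ≠ v ∧ ∃ i, u ∈ 𝓘 i ∧ v ∈ 𝓘 i)
    (k : ℕ) (hk : k = P.cliqueNum) :
    Real.logb q k ≤ capacity 𝓘 ∧
    capacity 𝓘 ≤ Real.logb q ((k : ℝ) * t * Real.exp 1) := by
  classical
  have hq0 : 0 < q := by omega
  have hq1 : (1 : ℝ) < (q : ℝ) := by exact_mod_cast by omega
  have hlogq : 0 < Real.log q := Real.log_pos hq1
  have i0 : Fin t := ⟨0, by omega⟩
  obtain ⟨u0, hu0⟩ := hne i0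
  have hk1 : 1 ≤ k := by
    rw [hk]
    have hcl : P.IsClique (({u0} : Finset (Fin q)) : Set (Fin q)) := by
      simp [SimpleGraph.isClique_iff]
    have h := SimpleGraph.IsClique.card_le_cliqueNum (G := P) (t := {u0}) (tc := hcl)
    simpa using h
  obtain ⟨s, hsclq⟩ := P.exists_isNClique_cliqueNum
  have hscard : s.card = k := by rw [hk]; exact hsclq.card_eq
  have hspair : ∀ u ∈ s, ∀ v ∈ s, u ≠ v → ∃ i, u ∈ 𝓘 i ∧ v ∈ 𝓘 i := by
    intro u hu v hv huv
    exact ((hP u v).mp (hsclq.isClique (Finset.mem_coe.mpr hu) (Finset.mem_coe.mpr hv) huv)).2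
  set U : Finset (Fin q) := Finset.univ.biUnion 𝓘 with hUdef
  have hUsub : ∀ i, 𝓘 i ⊆ U := fun i a ha => Finset.mem_biUnion.mpr ⟨i, Finset.mem_univ i, ha⟩
  have hu0U : u0 ∈ U := hUsub i0 hu0
  have hIcard : ∀ i, (𝓘 i).card ≤ k := by
    intro i
    rw [hk]
    have hcl : P.IsClique ((𝓘 i : Finset (Fin q)) : Set (Fin q)) := by
      intro u hu v hv huv
      exact (hP u v).mpr ⟨huv, i, Finset.mem_coe.mp hu, Finset.mem_coe.mp hv⟩
    exact SimpleGraph.IsClique.card_le_cliqueNum (G := P) (tc := hcl)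
  have hUcard : U.card ≤ k * t := by
    calc U.card ≤ ∑ i, (𝓘 i).card := Finset.card_biUnion_le
      _ ≤ ∑ _i : Fin t, k := Finset.sum_le_sum (fun i _ => hIcard i)
      _ = t * k := by simp [Finset.sum_const, mul_comm]
      _ = k * t := mul_comm _ _
  have hkR : (0:ℝ) < (k:ℝ) := by exact_mod_cast hk1
  have htR : (0:ℝ) < (t:ℝ) := by exact_mod_cast by omega
  have hktR : (1:ℝ) ≤ (k:ℝ) * (t:ℝ) := by
    have : (1:ℕ) ≤ k * t := Nat.one_le_iff_ne_zero.mpr (by positivity)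
    exact_mod_cast this
  set F : ℕ → ℝ := fun n : ℕ =>
    Real.logb q ((channelOutputs 𝓘 n).ncard : ℝ) / (n : ℝ) with hFdef
  have hpos : ∀ n, 0 < (channelOutputs 𝓘 n).ncard := fun n =>
    (Set.ncard_pos (outputs_finite 𝓘 n)).mpr (outputs_nonempty hq0 𝓘 n)
  have hposR : ∀ n, (0:ℝ) < ((channelOutputs 𝓘 n).ncard : ℝ) := fun n => by
    exact_mod_cast hpos n
  have hF0 : ∀ n, 0 ≤ F n := fun n =>
    div_nonneg (Real.logb_nonneg hq1 (by exact_mod_cast hpos n)) (Nat.cast_nonneg n)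
  have hub : ∀ n : ℕ, 1 ≤ n → F n ≤ Real.logb q ((k:ℝ) * t * Real.exp 1) := by
    intro n hn
    have hnR : (0:ℝ) < (n:ℝ) := by exact_mod_cast hn
    have hcount : ((channelOutputs 𝓘 n).ncard : ℝ) ≤ ((n:ℝ) + 1) * ((k:ℝ) * t) ^ n := by
      have h1 : (channelOutputs 𝓘 n).ncard ≤ (n+1) * U.card ^ n :=
        upper_card 𝓘 U hUsub u0 hu0U n
      have h2 : (n+1) * U.card ^ n ≤ (n+1) * (k*t) ^ n :=
        Nat.mul_le_mul_left _ (Nat.pow_le_pow_left hUcard n)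
      calc ((channelOutputs 𝓘 n).ncard : ℝ) ≤ (((n+1) * (k*t)^n : ℕ) : ℝ) := by
            exact_mod_cast h1.trans h2
        _ = ((n:ℝ)+1) * ((k:ℝ)*t)^n := by push_cast; ring
    have hlog : Real.log ((channelOutputs 𝓘 n).ncard : ℝ) ≤
        (n:ℝ) * Real.log ((k:ℝ)*t*Real.exp 1) := by
      have l1 : Real.log ((channelOutputs 𝓘 n).ncard : ℝ) ≤
          Real.log (((n:ℝ)+1) * ((k:ℝ)*t)^n) :=
        (Real.log_le_log_iff (hposR n) (by positivity)).mpr hcount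
      have l2 : Real.log (((n:ℝ)+1) * ((k:ℝ)*t)^n) =
          Real.log ((n:ℝ)+1) + (n:ℝ) * Real.log ((k:ℝ)*t) := by
        rw [Real.log_mul (by positivity) (by positivity), Real.log_pow]
      have l3 : Real.log ((n:ℝ)+1) ≤ (n:ℝ) := by
        have := Real.log_le_sub_one_of_pos (x := (n:ℝ)+1) (by positivity)
        linarith
      have l4 : Real.log ((k:ℝ)*t*Real.exp 1) = Real.log ((k:ℝ)*t) + 1 := by
        rw [Real.log_mul (by positivity) (Real.exp_ne_zero 1), Real.log_exp]
      have l5 : 0 ≤ Real.log ((k:ℝ)*t) := Real.log_nonneg hktR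
      calc Real.log ((channelOutputs 𝓘 n).ncard : ℝ)
          ≤ Real.log ((n:ℝ)+1) + (n:ℝ) * Real.log ((k:ℝ)*t) := l2 ▸ l1
        _ ≤ (n:ℝ) + (n:ℝ) * Real.log ((k:ℝ)*t) := by linarith
        _ = (n:ℝ) * Real.log ((k:ℝ)*t*Real.exp 1) := by rw [l4]; ring
    show Real.logb q ((channelOutputs 𝓘 n).ncard : ℝ) / (n : ℝ) ≤
      Real.logb q ((k:ℝ) * t * Real.exp 1)
    rw [Real.logb, Real.logb, div_div, div_le_div_iff₀ (by positivity) hlogq]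
    have h := mul_le_mul_of_nonneg_right hlog hlogq.le
    ring_nf at h ⊢
    linarith
  have hlb : ∀ n : ℕ, 1 ≤ n → Real.logb q (k:ℝ) ≤ F n := by
    intro n hn
    have hnR : (0:ℝ) < (n:ℝ) := by exact_mod_cast hn
    have hcnt : ((k:ℝ))^n ≤ ((channelOutputs 𝓘 n).ncard : ℝ) := by
      have h := lower_card 𝓘 s hspair n
      rw [hscard] at h
      exact_mod_cast h
    have hlog : (n:ℝ) * Real.log (k:ℝ) ≤ Real.log ((channelOutputs 𝓘 n).ncard : ℝ) := by
      calc (n:ℝ) * Real.log (k:ℝ) = Real.log ((k:ℝ)^n) := (Real.log_pow _ _).symm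
        _ ≤ _ := (Real.log_le_log_iff (by positivity) (hposR n)).mpr hcnt
    show Real.logb q (k:ℝ) ≤ Real.logb q ((channelOutputs 𝓘 n).ncard : ℝ) / (n : ℝ)
    rw [Real.logb, Real.logb, div_div, div_le_div_iff₀ hlogq (by positivity)]
    have h := mul_le_mul_of_nonneg_right hlog hlogq.le
    ring_nf at h ⊢
    linarith
  have hcap : capacity 𝓘 = Filter.atTop.limsup F := rfl
  have hbdd : Filter.IsBoundedUnder (· ≤ ·) Filter.atTop F :=
    Filter.isBoundedUnder_of_eventually_le (a := Real.logb q ((k:ℝ)*t*Real.exp 1))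
      (Filter.eventually_atTop.mpr ⟨1, hub⟩)
  constructor
  · rw [hcap]
    exact Filter.le_limsup_of_frequently_le
      ((Filter.eventually_atTop.mpr ⟨1, hlb⟩).frequently) hbdd
  · rw [hcap]
    exact Filter.limsup_le_of_le (Filter.isCoboundedUnder_le_of_le _ hF0)
      (Filter.eventually_atTop.mpr ⟨1, hub⟩)
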